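/- arXiv:2106.10233 — 2 statements merged into one kernel-verified Lean document; each statement's English description precedes it below -/
import Mathlib

section
/- Let k ∈ ℕ and let V be a finite-dimensional nonzero real vector space such that 2^k does not divide dim(V). If every linear operator on every nonzero real vector space of dimension ≤ dim(V) not divisible by 2^k has a true-pair vector, then any two commuting linear operators S, T on V have a common true-pair vector, i.e., there exist a nonzero v ∈ V and reals α, β, γ, δ with ((S - αI)² + β²I)(v) = 0 and ((T - γI)² + δ²I)(v) = 0. -/
open Module LinearMap

private lemma commute_poly_aux {V : Type} [AddCommGroup V] [Module ℝ V]
    {S T : Module.End ℝ V} (h : Commute S T) (α β : ℝ) :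
    Commute ((S - α • 1)^2 + β^2 • 1) T :=
  ((h.sub_left ((Commute.one_left T).smul_left α)).pow_left 2).add_left
    ((Commute.one_left T).smul_left _)

private lemma restrict_poly_aux {V : Type} [AddCommGroup V] [Module ℝ V]
    (S : Module.End ℝ V) (U : Submodule ℝ V) (hU : ∀ x ∈ U, S x ∈ U) (α β : ℝ) (x : U) :
    ((((S.restrict hU) - α • 1)^2 + β^2 • 1 : Module.End ℝ U) x : V)
      = ((S - α • 1)^2 + β^2 • 1 : Module.End ℝ V) x := by
  simp [pow_two, LinearMap.add_apply, Module.End.mul_apply, LinearMap.sub_apply,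
    LinearMap.smul_apply, Module.End.one_apply, LinearMap.restrict_coe_apply]

private lemma main_aux (k D : ℕ)
    (hyp : ∀ (W : Type) [AddCommGroup W] [Module ℝ W] [FiniteDimensional ℝ W],
      0 < Module.finrank ℝ W → Module.finrank ℝ W ≤ D →
      ¬ (2 ^ k ∣ Module.finrank ℝ W) →
      ∀ L : Module.End ℝ W, ∃ (α β : ℝ) (w : W), w ≠ 0 ∧
        (((L - α • 1) ^ 2 + β ^ 2 • 1 : Module.End ℝ W) w) = 0) :
    ∀ n : ℕ, ∀ (V : Type) [AddCommGroup V] [Module ℝ V] [FiniteDimensional ℝ V],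
      Module.finrank ℝ V ≤ n → 0 < Module.finrank ℝ V → Module.finrank ℝ V ≤ D →
      ¬ (2 ^ k ∣ Module.finrank ℝ V) →
      ∀ S T : Module.End ℝ V, S * T = T * S →
      ∃ (v : V) (α β γ δ : ℝ), v ≠ 0 ∧
        (((S - α • 1) ^ 2 + β ^ 2 • 1 : Module.End ℝ V) v) = 0 ∧
        (((T - γ • 1) ^ 2 + δ ^ 2 • 1 : Module.End ℝ V) v) = 0 := by
  intro n
  induction n with
  | zero =>
    intro V _ _ _ hn h0 _ _ _ _ _
    omega
  | succ n IH =>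
    intro V _ _ _ hn h0 hD hdvd S T hcomm
    have hST : Commute S T := hcomm
    -- apply hyp to S
    obtain ⟨α, β, w, hw0, hw⟩ := hyp V h0 hD hdvd S
    set p : Module.End ℝ V := (S - α • 1)^2 + β^2 • 1 with hp
    set N := Module.finrank ℝ V with hN
    by_cases hK : LinearMap.ker (p ^ N) = ⊤
    · -- p is nilpotent; use hyp on T, then minimal power trick
      obtain ⟨γ, δ, u, hu0, hu⟩ := hyp V h0 hD hdvd T
      set q : Module.End ℝ V := (T - γ • 1)^2 + δ^2 • 1 with hq
      have hpq : Commute q p := by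
        exact (commute_poly_aux (commute_poly_aux hST.symm γ δ).symm α β).symm
      have hexists : ∃ m, (p ^ m) u = 0 := by
        refine ⟨N, ?_⟩
        have : u ∈ LinearMap.ker (p ^ N) := hK ▸ Submodule.mem_top
        exact this
      classical
      set m := Nat.find hexists with hm
      have hm0 : m ≠ 0 := by
        intro h
        have := Nat.find_spec hexists
        rw [← hm, h] at this
        simp at this
        exact hu0 this
      have hmspec : (p ^ m) u = 0 := Nat.find_spec hexists
      refine ⟨(p ^ (m - 1)) u, α, β, γ, δ, ?_, ?_, ?_⟩
      · intro h
        exact Nat.find_min hexists (by omega : m - 1 < m) h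
      · have : p ((p ^ (m - 1)) u) = (p ^ m) u := by
          rw [← Module.End.mul_apply, ← pow_succ']
          congr 2
          omega
        rw [← hp, this, hmspec]
      · have : q ((p ^ (m - 1)) u) = (p ^ (m - 1)) (q u) := by
          rw [← Module.End.mul_apply, ← Module.End.mul_apply, (hpq.pow_right (m-1)).eq]
        rw [← hq, this, hu, map_zero]
    · -- kernel of p^N is a proper nonzero invariant subspace; recurse
      have hpT : Commute (p ^ N) T := (commute_poly_aux hST α β).pow_left N
      have hpS : Commute (p ^ N) S := (commute_poly_aux (Commute.refl S) α β).pow_left N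
      set K := LinearMap.ker (p ^ N) with hKdef
      set I := LinearMap.range (p ^ N) with hIdef
      have hKS : ∀ x ∈ K, S x ∈ K := by
        intro x hx
        simp only [hKdef, LinearMap.mem_ker] at hx ⊢
        rw [← Module.End.mul_apply, hpS.eq, Module.End.mul_apply, hx, map_zero]
      have hKT : ∀ x ∈ K, T x ∈ K := by
        intro x hx
        simp only [hKdef, LinearMap.mem_ker] at hx ⊢
        rw [← Module.End.mul_apply, hpT.eq, Module.End.mul_apply, hx, map_zero]
      have hIS : ∀ x ∈ I, S x ∈ I := by
        rintro x ⟨y, rfl⟩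
        exact ⟨S y, by rw [← Module.End.mul_apply, hpS.eq, Module.End.mul_apply]⟩
      have hIT : ∀ x ∈ I, T x ∈ I := by
        rintro x ⟨y, rfl⟩
        exact ⟨T y, by rw [← Module.End.mul_apply, hpT.eq, Module.End.mul_apply]⟩
      -- dimensions
      have hrn : Module.finrank ℝ I + Module.finrank ℝ K = Module.finrank ℝ V :=
        LinearMap.finrank_range_add_finrank_ker (p ^ N)
      have hKpos : 0 < Module.finrank ℝ K := by
        rw [Module.finrank_pos_iff_exists_ne_zero]
        refine ⟨⟨w, ?_⟩, ?_⟩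
        · simp only [hKdef, LinearMap.mem_ker]
          have hN1 : N = (N - 1) + 1 := by omega
          rw [hN1, pow_succ, Module.End.mul_apply, hw, map_zero]
        · simpa using hw0
      have hIpos : 0 < Module.finrank ℝ I := by
        rw [Module.finrank_pos_iff_exists_ne_zero]
        by_contra h
        push_neg at h
        apply hK
        rw [eq_top_iff]
        intro x _
        simp only [hKdef, LinearMap.mem_ker]
        by_contra hx
        exact hx (by simpa using congrArg Subtype.val (h ⟨(p ^ N) x, ⟨x, rfl⟩⟩))
      -- pick the submodule whose finrank is not divisible
      have hpick : ¬ (2 ^ k ∣ Module.finrank ℝ K) ∨ ¬ (2 ^ k ∣ Module.finrank ℝ I) := by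
        by_contra h
        push_neg at h
        apply hdvd
        rw [hN, ← hrn]
        exact dvd_add h.2 h.1
      rcases hpick with hnd | hnd
      · -- recurse on K
        have hlt : Module.finrank ℝ K < Module.finrank ℝ V := by omega
        obtain ⟨v, α', β', γ', δ', hv0, hv1, hv2⟩ :=
          IH K (by omega) hKpos (by omega) hnd (S.restrict hKS) (T.restrict hKT)
            (by ext x
                simp only [Module.End.mul_apply, LinearMap.restrict_coe_apply]
                exact LinearMap.congr_fun hcomm x)
        refine ⟨(v : V), α', β', γ', δ', fun h => hv0 (Subtype.ext h), ?_, ?_⟩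
        · rw [← restrict_poly_aux S K hKS α' β' v, hv1]; rfl
        · rw [← restrict_poly_aux T K hKT γ' δ' v, hv2]; rfl
      · -- recurse on I
        have hlt : Module.finrank ℝ I < Module.finrank ℝ V := by omega
        obtain ⟨v, α', β', γ', δ', hv0, hv1, hv2⟩ :=
          IH I (by omega) hIpos (by omega) hnd (S.restrict hIS) (T.restrict hIT)
            (by ext x
                simp only [Module.End.mul_apply, LinearMap.restrict_coe_apply]
                exact LinearMap.congr_fun hcomm x)
        refine ⟨(v : V), α', β', γ', δ', fun h => hv0 (Subtype.ext h), ?_, ?_⟩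
        · rw [← restrict_poly_aux S I hIS α' β' v, hv1]; rfl
        · rw [← restrict_poly_aux T I hIT γ' δ' v, hv2]; rfl

theorem common_true_pair_of_not_dvd (k : ℕ) (V : Type) [AddCommGroup V] [Module ℝ V]
    [FiniteDimensional ℝ V] (hV : 0 < Module.finrank ℝ V)
    (hdvd : ¬ (2 ^ k ∣ Module.finrank ℝ V))
    (hyp : ∀ (W : Type) [AddCommGroup W] [Module ℝ W] [FiniteDimensional ℝ W],
      0 < Module.finrank ℝ W → Module.finrank ℝ W ≤ Module.finrank ℝ V →
      ¬ (2 ^ k ∣ Module.finrank ℝ W) →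
      ∀ L : Module.End ℝ W, ∃ (α β : ℝ) (w : W), w ≠ 0 ∧
        (((L - α • 1) ^ 2 + β ^ 2 • 1 : Module.End ℝ W) w) = 0)
    (S T : Module.End ℝ V) (hcomm : S * T = T * S) :
    ∃ (v : V) (α β γ δ : ℝ), v ≠ 0 ∧
      (((S - α • 1) ^ 2 + β ^ 2 • 1 : Module.End ℝ V) v) = 0 ∧
      (((T - γ • 1) ^ 2 + δ ^ 2 • 1 : Module.End ℝ V) v) = 0 := by
  exact main_aux k (Module.finrank ℝ V) hyp (Module.finrank ℝ V) V le_rfl hV le_rfl hdvd S T hcomm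
end

section
/- Any two commuting linear operators S, T on a finite-dimensional nonzero real vector space V have a common true-pair vector: there exist a nonzero v ∈ V and real numbers α, β, γ, δ such that ((S - αI)² + β²I)(v) = 0 and ((T - γI)² + δ²I)(v) = 0. -/
open Polynomial

lemma key_lemma (V : Type*) [AddCommGroup V] [Module ℝ V] [FiniteDimensional ℝ V]
    [Nontrivial V] (f : Module.End ℝ V) :
    ∃ (v : V) (α β : ℝ), v ≠ 0 ∧ (((f - α • 1) ^ 2 + β ^ 2 • 1 : Module.End ℝ V) v) = 0 := by
  have hf : IsIntegral ℝ f := Algebra.IsIntegral.isIntegral f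
  have h1 : (minpoly ℝ f) ≠ 0 := minpoly.ne_zero hf
  have h2 : ¬ IsUnit (minpoly ℝ f) := minpoly.not_isUnit ℝ f
  obtain ⟨q, hqirr, r, hqr⟩ := WfDvdMonoid.exists_irreducible_factor h2 h1
  have hq2 : q.natDegree ≤ 2 := hqirr.natDegree_le_two
  have hq1 : 0 < q.natDegree :=
    natDegree_pos_iff_degree_pos.2 (degree_pos_of_irreducible hqirr)
  have hq0 : q ≠ 0 := hqirr.ne_zero
  have hr0 : r ≠ 0 := by rintro rfl; simp [hqr] at h1
  -- aeval f r ≠ 0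
  have haer : Polynomial.aeval f r ≠ 0 := by
    intro h0
    have hd := minpoly.degree_le_of_ne_zero ℝ f hr0 h0
    have : (minpoly ℝ f).natDegree ≤ r.natDegree := natDegree_le_natDegree hd
    have hmul : (minpoly ℝ f).natDegree = q.natDegree + r.natDegree := by
      rw [hqr, natDegree_mul hq0 hr0]
    omega
  obtain ⟨w, hw⟩ : ∃ w, (Polynomial.aeval f r) w ≠ 0 := by
    by_contra h
    push_neg at h
    exact haer (LinearMap.ext fun x => h x)
  set v := (Polynomial.aeval f r) w with hv
  have hqv : (Polynomial.aeval f q) v = 0 := by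
    have : (Polynomial.aeval f q) ((Polynomial.aeval f r) w)
        = (Polynomial.aeval f (minpoly ℝ f)) w := by
      rw [hqr, map_mul, Module.End.mul_apply]
    rw [hv, this, minpoly.aeval, LinearMap.zero_apply]
  -- monic normalization
  set c := q.leadingCoeff with hc
  have hcne : c ≠ 0 := leadingCoeff_ne_zero.2 hq0
  set m := q * C c⁻¹ with hm
  have hmono : m.Monic := monic_mul_leadingCoeff_inv hq0
  have hmne : m ≠ 0 := hmono.ne_zero
  have hmdeg : m.natDegree = q.natDegree := by
    rw [hm, natDegree_mul hq0 (by simp [hcne]), natDegree_C, add_zero]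
  have hmv : (Polynomial.aeval f m) v = 0 := by
    rw [hm, map_mul, Module.End.mul_apply, aeval_C]
    rw [show ((Polynomial.aeval f q)) ((algebraMap ℝ (Module.End ℝ V)) c⁻¹ v)
      = c⁻¹ • (Polynomial.aeval f q) v
      from by rw [Algebra.algebraMap_eq_smul_one]; simp [map_smul], hqv, smul_zero]
  -- q has no real root:
  interval_cases hh : q.natDegree
  · -- degree 1
    have hem : m = X + C (m.coeff 0) := by
      have := hmono.eq_X_add_C (by omega : m.natDegree = 1)
      exact this
    refine ⟨v, -(m.coeff 0), 0, hw, ?_⟩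
    have hfv : (f - (-(m.coeff 0)) • 1) v = 0 := by
      have := hmv
      rw [hem] at this
      simp only [map_add, aeval_X, aeval_C, LinearMap.add_apply] at this
      simp only [LinearMap.sub_apply, LinearMap.smul_apply, Module.End.one_apply]
      rw [Algebra.algebraMap_eq_smul_one] at this
      simpa [sub_eq_add_neg] using this
    conv_lhs => rw [sq]
    simp only [LinearMap.add_apply, Module.End.mul_apply, hfv, map_zero,
      LinearMap.smul_apply, Module.End.one_apply]
    simp
  · -- degree 2
    have hm2 : m.natDegree = 2 := by omega
    set b := m.coeff 1 with hb
    set c0 := m.coeff 0 with hc0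
    have hem : m = X ^ 2 + C b * X + C c0 := by
      have h3 : m.coeff 2 = 1 := by
        have := hmono.coeff_natDegree; rwa [hm2] at this
      ext n
      rcases n with _ | _ | _ | n
      · simp [hb, hc0, coeff_X_pow]
      · simp [hb, hc0, coeff_X_pow]
      · simp [h3, coeff_X_pow]
      · have hz : m.coeff (n + 3) = 0 := coeff_eq_zero_of_natDegree_lt (by omega)
        simp [hz, coeff_X_pow, coeff_C]
    -- no real root
    have hnoroot : ∀ x : ℝ, x ^ 2 + b * x + c0 ≠ 0 := by
      intro x hx
      have hroot : q.IsRoot x := by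
        have hmx : m.IsRoot x := by
          rw [hem]; simp [IsRoot, hx]
        have : q = m * C c := by
          rw [hm, mul_assoc, ← map_mul, inv_mul_cancel₀ hcne, map_one, mul_one]
        rw [this]; simp [IsRoot.def, hmx.eq_zero]
      have := degree_eq_one_of_irreducible_of_root hqirr hroot
      rw [degree_eq_natDegree hq0, hh] at this
      exact absurd this (by norm_num)
    have hdisc : discrim 1 b c0 < 0 := by
      by_contra hge
      push_neg at hge
      obtain ⟨x, hx⟩ := exists_quadratic_eq_zero (one_ne_zero)
        ⟨Real.sqrt (discrim 1 b c0), (Real.mul_self_sqrt hge).symm⟩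
      exact hnoroot x (by nlinarith [hx])
    have hpos : 0 < c0 - b ^ 2 / 4 := by
      rw [discrim] at hdisc; nlinarith
    set α := -(b / 2) with hα
    set β := Real.sqrt (c0 - b ^ 2 / 4) with hβ
    have hβ2 : β ^ 2 = c0 - b ^ 2 / 4 := Real.sq_sqrt hpos.le
    refine ⟨v, α, β, hw, ?_⟩
    have hc' : c0 = α ^ 2 + β ^ 2 := by rw [hβ2, hα]; ring
    have hb' : b = -(2 * α) := by rw [hα]; ring
    have h := hmv
    rw [hem] at h
    simp only [map_add, map_mul, map_pow, aeval_X, aeval_C,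
      Algebra.algebraMap_eq_smul_one, smul_mul_assoc, one_mul, sq,
      Module.End.mul_apply, LinearMap.add_apply, LinearMap.smul_apply,
      Module.End.one_apply] at h
    rw [hb', hc'] at h
    simp only [sq, LinearMap.add_apply, Module.End.mul_apply, LinearMap.sub_apply,
      LinearMap.smul_apply, Module.End.one_apply, map_sub, map_smul]
    linear_combination (norm := module) h
theorem common_true_pair (V : Type*) [AddCommGroup V] [Module ℝ V]
    [FiniteDimensional ℝ V] (hV : 0 < Module.finrank ℝ V)
    (S T : Module.End ℝ V) (hcomm : S * T = T * S) :
    ∃ (v : V) (α β γ δ : ℝ), v ≠ 0 ∧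
      (((S - α • 1) ^ 2 + β ^ 2 • 1 : Module.End ℝ V) v) = 0 ∧
      (((T - γ • 1) ^ 2 + δ ^ 2 • 1 : Module.End ℝ V) v) = 0 := by
  have : Nontrivial V := Module.nontrivial_of_finrank_pos hV
  obtain ⟨v₀, α, β, hv₀, hSv₀⟩ := key_lemma V S
  set g : Module.End ℝ V := (S - α • 1) ^ 2 + β ^ 2 • 1 with hg
  set W : Submodule ℝ V := LinearMap.ker g with hW
  have hgT : Commute T g := by
    have hTS : Commute T S := hcomm.symm
    exact ((hTS.sub_right ((Commute.one_right T).smul_right α)).pow_right 2).add_right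
      ((Commute.one_right T).smul_right (β ^ 2))
  have hWT : ∀ x ∈ W, T x ∈ W := by
    intro x hx
    have hx' : g x = 0 := hx
    have : g (T x) = T (g x) := by
      rw [← Module.End.mul_apply, ← Module.End.mul_apply, hgT.eq]
    exact LinearMap.mem_ker.2 (by rw [this, hx', map_zero])
  set T' : Module.End ℝ W := T.restrict hWT with hT'
  have hWnt : Nontrivial W := ⟨⟨⟨v₀, hSv₀⟩, 0, fun h => hv₀ (congrArg Subtype.val h)⟩⟩
  obtain ⟨u, γ, δ, hu, hTu⟩ := key_lemma W T'
  refine ⟨(u : V), α, β, γ, δ, by simpa using hu, u.2, ?_⟩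
  have hval : ∀ x : W, ((T' - γ • 1) x : V) = (T - γ • 1) (x : V) := by
    intro x
    simp [hT', LinearMap.restrict_apply]
  have hcv := congrArg (Subtype.val) hTu
  rw [sq] at hcv ⊢
  simp only [LinearMap.add_apply, Module.End.mul_apply, LinearMap.smul_apply,
    Module.End.one_apply] at hcv ⊢
  simp only [Submodule.coe_add, SetLike.val_smul, ZeroMemClass.coe_zero] at hcv
  rw [hval, hval] at hcv
  exact hcv
end
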